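/- Let n = 3 with the SED privacy function and suppose all three components of the optimum are interior (0 < δᵢ < 1). Then the multipliers are α = −2m̄₀μ/(3σ²_{m₀}) and β = 2μ/(3σ²_{m₀}), where m̄₀ and σ²_{m₀} > 0 are the mean and variance of {m₁,m₂,m₃}; consequently δᵢ* = v_{i,0}μ/(3dᵢ) with v_{i,0} = (mᵢ−m̄₀)/σ²_{m₀}, and the optimal value is R(μ) = μ²/(3σ²_{m₀}). -/

import Mathlib

open Finset

theorem n3_sed_multipliers_all_interior
    (p q w : Fin 3 → ℝ)
    (hp : ∀ i, 0 < p i) (hq : ∀ i, 0 < q i)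
    (hps : ∑ i, p i = 1) (hqs : ∑ i, q i = 1)
    (hpq : ∀ i, p i ≠ q i) (hw : ∀ i, 0 < w i)
    (d m : Fin 3 → ℝ) (hd : ∀ i, d i = q i - p i)
    (hm : ∀ i, m i = w i / d i)
    (mbar0 s0 : ℝ)
    (hmbar0 : mbar0 = (m 0 + m 1 + m 2) / 3)
    (hs0 : s0 = (∑ i, (m i - mbar0) ^ 2) / 3)
    (δ : Fin 3 → ℝ) (α β μ : ℝ)
    (hδ : ∀ i, δ i = α / (2 * d i) + w i * β / (2 * (d i) ^ 2))
    (hint : ∀ i, 0 < δ i ∧ δ i < 1)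
    (hc1 : ∑ i, d i * δ i = 0)
    (hc2 : ∑ i, w i * δ i = μ) :
    0 < s0 ∧
    α = -(2 * mbar0 * μ) / (3 * s0) ∧ β = 2 * μ / (3 * s0) ∧
    (∀ i, δ i = (m i - mbar0) / s0 * μ / (3 * d i)) ∧
    ∑ i, (d i) ^ 2 * (δ i) ^ 2 = μ ^ 2 / (3 * s0) := by
  have hd0 : ∀ i, d i ≠ 0 := by
    intro i
    rw [hd]
    exact sub_ne_zero.mpr fun h => hpq i h.symm
  have hwmd : ∀ i, w i = m i * d i := by
    intro i; rw [hm, div_mul_cancel₀ _ (hd0 i)]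
  have hdsum : d 0 + d 1 + d 2 = 0 := by
    have := hd 0; have := hd 1; have := hd 2
    simp [Fin.sum_univ_three] at hps hqs
    linarith
  have e1 : ∀ i, d i * δ i = α / 2 + m i * β / 2 := by
    intro i
    rw [hδ, hwmd]
    field_simp [hd0 i]
  have e2 : ∀ i, w i * δ i = m i * (α / 2 + m i * β / 2) := by
    intro i
    rw [hwmd, mul_assoc, e1]
  simp only [Fin.sum_univ_three] at hc1 hc2 hs0
  rw [e1 0, e1 1, e1 2] at hc1
  rw [e2 0, e2 1, e2 2] at hc2
  have hs0nn : 0 ≤ s0 := by rw [hs0]; positivity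
  have hs0pos : 0 < s0 := by
    rcases hs0nn.lt_or_eq with h | h
    · exact h
    · exfalso
      have hsum0 : (m 0 - mbar0) ^ 2 + (m 1 - mbar0) ^ 2 + (m 2 - mbar0) ^ 2 = 0 := by
        linarith
      have n0 := sq_nonneg (m 0 - mbar0)
      have n1 := sq_nonneg (m 1 - mbar0)
      have n2 := sq_nonneg (m 2 - mbar0)
      have hm0 : m 0 = mbar0 := by
        have : (m 0 - mbar0) ^ 2 = 0 := by linarith
        have := sq_eq_zero_iff.mp this; linarith
      have hm1 : m 1 = mbar0 := by
        have : (m 1 - mbar0) ^ 2 = 0 := by linarith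
        have := sq_eq_zero_iff.mp this; linarith
      have hm2 : m 2 = mbar0 := by
        have : (m 2 - mbar0) ^ 2 = 0 := by linarith
        have := sq_eq_zero_iff.mp this; linarith
      have hwsum : w 0 + w 1 + w 2 = mbar0 * (d 0 + d 1 + d 2) := by
        rw [hwmd 0, hwmd 1, hwmd 2, hm0, hm1, hm2]; ring
      rw [hdsum] at hwsum
      have := hw 0; have := hw 1; have := hw 2
      linarith
  have hs0ne : s0 ≠ 0 := ne_of_gt hs0pos
  have h3s0ne : (3 : ℝ) * s0 ≠ 0 := by positivity
  have hA : 3 * α + (m 0 + m 1 + m 2) * β = 0 := by linear_combination 2 * hc1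
  have hB : (m 0 + m 1 + m 2) * α + (m 0 ^ 2 + m 1 ^ 2 + m 2 ^ 2) * β = 2 * μ := by
    linear_combination 2 * hc2
  have h3s0 : 3 * s0 = m 0 ^ 2 + m 1 ^ 2 + m 2 ^ 2 - 3 * mbar0 ^ 2 := by
    linear_combination 3 * hs0 + 6 * mbar0 * hmbar0
  have h3s0' : (m 0 - mbar0) ^ 2 + (m 1 - mbar0) ^ 2 + (m 2 - mbar0) ^ 2 = 3 * s0 := by
    linear_combination -3 * hs0
  have hαm : α = -mbar0 * β := by linear_combination hA / 3 + β * hmbar0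
  have hβmul : β * (3 * s0) = 2 * μ := by
    linear_combination hB + β * h3s0 - mbar0 * hA + 3 * (α - mbar0 * β) * hmbar0
  have hβ : β = 2 * μ / (3 * s0) := by
    rw [eq_div_iff h3s0ne]; exact hβmul
  have hα : α = -(2 * mbar0 * μ) / (3 * s0) := by
    rw [eq_div_iff h3s0ne]
    linear_combination (3 * s0) * hαm - mbar0 * hβmul
  have key : ∀ i, d i * δ i * (3 * s0) = (m i - mbar0) * μ := by
    intro i
    linear_combination (3 * s0) * e1 i + (3 * s0 / 2) * hαm + ((m i - mbar0) / 2) * hβmul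
  refine ⟨hs0pos, hα, hβ, ?_, ?_⟩
  · intro i
    have h3d : (3 : ℝ) * d i ≠ 0 := mul_ne_zero three_ne_zero (hd0 i)
    rw [eq_div_iff h3d]
    field_simp [hs0ne]
    linear_combination key i
  · simp only [Fin.sum_univ_three]
    rw [eq_div_iff h3s0ne]
    apply mul_left_cancel₀ h3s0ne
    linear_combination (d 0 * δ 0 * (3 * s0) + (m 0 - mbar0) * μ) * key 0 +
      (d 1 * δ 1 * (3 * s0) + (m 1 - mbar0) * μ) * key 1 +
      (d 2 * δ 2 * (3 * s0) + (m 2 - mbar0) * μ) * key 2 + μ ^ 2 * h3s0'
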